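/- arXiv:1006.2619 — 2 statements merged into one kernel-verified Lean document; each statement's English description precedes it below -/
import Mathlib

section
/- For every ψ in H¹(Ω) with Ω = ℝ×(-a,a) vanishing on Γ_θ^D (for either θ = 0 or θ = π), the inequality ∫_Ω |∇ψ|² ≥ E_1 ∫_Ω |ψ|² holds, where E_1 = (π/(4a))². -/
open Real MeasureTheory

/-- Partial derivative in the first variable. -/
noncomputable def pd1 (f : ℝ × ℝ → ℝ) (p : ℝ × ℝ) : ℝ := deriv (fun t => f (t, p.2)) p.1

/-- Partial derivative in the second variable. -/
noncomputable def pd2 (f : ℝ × ℝ → ℝ) (p : ℝ × ℝ) : ℝ := deriv (fun t => f (p.1, t)) p.2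

open intervalIntegral Filter Topology

lemma poincare_1d_aux (a k : ℝ) (ha : 0 < a) (hk : 0 < k) (hk4 : k * (4 * a) = π)
    (u : ℝ → ℝ) (hu : ContDiff ℝ 1 u) (h0 : u (-a) = 0) :
    k ^ 2 * ∫ y in Set.Ioo (-a) a, u y ^ 2
      ≤ ∫ y in Set.Ioo (-a) a, (deriv u y) ^ 2 := by
  have hud : Differentiable ℝ u := hu.differentiable one_ne_zero
  have hu' : Continuous (deriv u) := (hu.iterate_deriv' 0 1).continuous
  set c : ℝ → ℝ := fun y => k * (Real.cos (k * (y + a)) / Real.sin (k * (y + a))) with hcdef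
  have hsin : ∀ y : ℝ, -a < y → y < 3 * a → 0 < Real.sin (k * (y + a)) := by
    intro y h1 h2
    apply Real.sin_pos_of_pos_of_lt_pi
    · have : 0 < y + a := by linarith
      positivity
    · calc k * (y + a) < k * (4 * a) := by
            apply mul_lt_mul_of_pos_left (by linarith) hk
        _ = π := hk4
  have hcderiv : ∀ y : ℝ, -a < y → y < 3 * a →
      HasDerivAt c (-(k ^ 2) - c y ^ 2) y := by
    intro y h1 h2
    have hs := hsin y h1 h2
    have hlin : HasDerivAt (fun y : ℝ => k * (y + a)) k y := by
      simpa using ((hasDerivAt_id y).add_const a).const_mul k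
    have hcos : HasDerivAt (fun y : ℝ => Real.cos (k * (y + a)))
        (-Real.sin (k * (y + a)) * k) y := (Real.hasDerivAt_cos _).comp y hlin
    have hsin' : HasDerivAt (fun y : ℝ => Real.sin (k * (y + a)))
        (Real.cos (k * (y + a)) * k) y := (Real.hasDerivAt_sin _).comp y hlin
    have hd := (hcos.div hsin' hs.ne').const_mul k
    refine hd.congr_deriv ?_
    have hpy := Real.sin_sq_add_cos_sq (k * (y + a))
    rw [hcdef]
    field_simp
  set g : ℝ → ℝ := fun y => c y * u y ^ 2 with hgdef
  set g' : ℝ → ℝ := fun y => (-(k ^ 2) - c y ^ 2) * u y ^ 2 + c y * (2 * u y * deriv u y)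
    with hg'def
  have hgderiv : ∀ y : ℝ, -a < y → y < 3 * a → HasDerivAt g (g' y) y := by
    intro y h1 h2
    have h2d : HasDerivAt (fun y => u y ^ 2) (2 * u y * deriv u y) y := by
      simpa using (hud y).hasDerivAt.fun_pow 2
    exact (hcderiv y h1 h2).mul h2d
  have hccont : ContinuousOn c (Set.Ioo (-a) (3 * a)) := by
    apply ContinuousOn.mul continuousOn_const
    apply ContinuousOn.div
    · exact (Real.continuous_cos.comp (by continuity)).continuousOn
    · exact (Real.continuous_sin.comp (by continuity)).continuousOn
    · intro y hy; exact (hsin y hy.1 hy.2).ne'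
  have hca : c a = 0 := by
    have h2 : k * (a + a) = π / 2 := by rw [show a + a = 2 * a by ring]; linarith [hk4]
    show k * (Real.cos (k * (a + a)) / Real.sin (k * (a + a))) = 0
    rw [h2, Real.cos_pi_div_two]
    simp
  have hga : g a = 0 := by show c a * u a ^ 2 = 0; rw [hca]; ring
  set F : ℝ → ℝ := fun t => ∫ y in t..a, ((deriv u y) ^ 2 - k ^ 2 * u y ^ 2) with hFdef
  have hhcont : Continuous (fun y => (deriv u y) ^ 2 - k ^ 2 * u y ^ 2) := by
    exact (hu'.pow 2).sub (continuous_const.mul (hu.continuous.pow 2))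
  have hFlb : ∀ t ∈ Set.Ioc (-a) a, -(g t) ≤ F t := by
    intro t ht
    have hta : t ≤ a := ht.2
    have hIcc : Set.uIcc t a = Set.Icc t a := Set.uIcc_of_le hta
    have hsub : Set.Icc t a ⊆ Set.Ioo (-a) (3 * a) := by
      intro y hy; exact ⟨lt_of_lt_of_le ht.1 hy.1, by linarith [hy.2]⟩
    have hg'cont : ContinuousOn g' (Set.Icc t a) := by
      have hc' : ContinuousOn c (Set.Icc t a) := hccont.mono hsub
      exact (((continuousOn_const.sub (hc'.pow 2)).mul
        ((hu.continuous.pow 2).continuousOn)).add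
        (hc'.mul (((continuous_const.mul hu.continuous).mul hu').continuousOn)))
    have hg'int : IntervalIntegrable g' volume t a := by
      rw [intervalIntegrable_iff_integrableOn_Icc_of_le hta]
      exact hg'cont.integrableOn_compact isCompact_Icc
    have hftc : ∫ y in t..a, g' y = g a - g t := by
      apply integral_eq_sub_of_hasDerivAt
      · intro y hy
        rw [hIcc] at hy
        exact hgderiv y (hsub hy).1 (hsub hy).2
      · exact hg'int
    have hsqint : IntervalIntegrable (fun y => (deriv u y - c y * u y) ^ 2) volume t a := by
      rw [intervalIntegrable_iff_integrableOn_Icc_of_le hta]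
      exact (((hu'.continuousOn).sub ((hccont.mono hsub).mul
        hu.continuous.continuousOn)).pow 2).integrableOn_compact isCompact_Icc
    have hsplit : F t = (∫ y in t..a, g' y) + ∫ y in t..a, (deriv u y - c y * u y) ^ 2 := by
      rw [hFdef, ← intervalIntegral.integral_add hg'int hsqint]
      apply intervalIntegral.integral_congr
      intro y hy
      simp only [hg'def]
      ring
    have hnn : 0 ≤ ∫ y in t..a, (deriv u y - c y * u y) ^ 2 :=
      intervalIntegral.integral_nonneg hta (fun y _ => sq_nonneg _)
    rw [hsplit, hftc, hga]
    linarith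
  obtain ⟨M, hM⟩ := (isCompact_Icc (a := -a) (b := a)).exists_bound_of_continuousOn
    hu'.continuousOn
  have hM0 : 0 ≤ M := le_trans (norm_nonneg _) (hM (-a) (Set.left_mem_Icc.2 (by linarith)))
  have hub : ∀ t ∈ Set.Icc (-a) a, |u t| ≤ M * (t + a) := by
    intro t ht
    have hta : -a ≤ t := ht.1
    have hftc : ∫ y in (-a)..t, deriv u y = u t - u (-a) := by
      apply integral_eq_sub_of_hasDerivAt (fun y _ => (hud y).hasDerivAt)
      exact hu'.intervalIntegrable _ _
    have hb := intervalIntegral.norm_integral_le_of_norm_le_const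
      (C := M) (f := deriv u) (a := -a) (b := t) (fun y hy => by
        apply hM
        have h := Set.uIoc_subset_uIcc hy
        rw [Set.uIcc_of_le hta] at h
        exact ⟨h.1, le_trans h.2 ht.2⟩)
    rw [hftc, h0, sub_zero] at hb
    calc |u t| ≤ M * |t - (-a)| := hb
      _ = M * (t + a) := by rw [abs_of_nonneg (by linarith)]; ring
  have hgb : ∀ t ∈ Set.Ioo (-a) a, g t ≤ M ^ 2 * (t + a) ∧ 0 ≤ g t := by
    intro t ht
    have hta : 0 < t + a := by linarith [ht.1]
    have hx1 : 0 < k * (t + a) := by positivity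
    have hx2 : k * (t + a) < π / 2 := by
      calc k * (t + a) < k * (2 * a) := mul_lt_mul_of_pos_left (by linarith [ht.2]) hk
        _ = π / 2 := by linarith [hk4]
    have hsint := hsin t ht.1 (by linarith [ht.2])
    have hcost : 0 < Real.cos (k * (t + a)) :=
      Real.cos_pos_of_mem_Ioo ⟨by linarith [Real.pi_pos], hx2⟩
    have hct0 : 0 ≤ c t := mul_nonneg hk.le (div_nonneg hcost.le hsint.le)
    refine ⟨?_, mul_nonneg hct0 (sq_nonneg _)⟩
    have htan : k * (t + a) < Real.tan (k * (t + a)) := Real.lt_tan hx1 hx2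
    have htanpos : 0 < Real.tan (k * (t + a)) := lt_trans hx1 htan
    have hcle : c t ≤ 1 / (t + a) := by
      have hct : c t = k / Real.tan (k * (t + a)) := by
        show k * (Real.cos (k * (t + a)) / Real.sin (k * (t + a))) = _
        rw [Real.tan_eq_sin_div_cos, div_div_eq_mul_div, mul_div_assoc]
      rw [hct, div_le_div_iff₀ htanpos hta]
      calc k * (t + a) ≤ Real.tan (k * (t + a)) := htan.le
        _ = 1 * Real.tan (k * (t + a)) := (one_mul _).symm
    have hu2 : u t ^ 2 ≤ (M * (t + a)) ^ 2 := by
      rw [← sq_abs (u t)]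
      exact pow_le_pow_left₀ (abs_nonneg _) (hub t (Set.mem_Icc_of_Ioo ht)) 2
    calc g t = c t * u t ^ 2 := rfl
      _ ≤ (1 / (t + a)) * (M * (t + a)) ^ 2 :=
          mul_le_mul hcle hu2 (sq_nonneg _) (by positivity)
      _ = M ^ 2 * (t + a) := by field_simp
  have hFcont : Continuous F := by
    have hint : ∀ s t : ℝ, IntervalIntegrable
        (fun y => (deriv u y) ^ 2 - k ^ 2 * u y ^ 2) volume s t :=
      fun s t => hhcont.intervalIntegrable s t
    have h1 : Continuous (fun t => ∫ y in a..t, ((deriv u y) ^ 2 - k ^ 2 * u y ^ 2)) :=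
      intervalIntegral.continuous_primitive hint a
    have hFeq : F = fun t => -(∫ y in a..t, ((deriv u y) ^ 2 - k ^ 2 * u y ^ 2)) := by
      funext t
      show (∫ y in t..a, ((deriv u y) ^ 2 - k ^ 2 * u y ^ 2)) = _
      rw [intervalIntegral.integral_symm]
    rw [hFeq]; exact h1.neg
  have hgt : Tendsto (fun t => -(g t)) (𝓝[>] (-a)) (𝓝 0) := by
    rw [← neg_zero]
    apply Tendsto.neg
    apply squeeze_zero' (g := fun t => M ^ 2 * (t + a))
    · filter_upwards [Ioo_mem_nhdsGT_of_mem (Set.left_mem_Ico.2 (by linarith : (-a:ℝ) < a))] with t ht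
      exact (hgb t ht).2
    · filter_upwards [Ioo_mem_nhdsGT_of_mem (Set.left_mem_Ico.2 (by linarith : (-a:ℝ) < a))] with t ht
      exact (hgb t ht).1
    · have h2 : Tendsto (fun t : ℝ => M ^ 2 * (t + a)) (𝓝 (-a)) (𝓝 (M ^ 2 * (-a + a))) :=
        Tendsto.const_mul _ ((continuous_id.add continuous_const).tendsto _)
      simpa using h2.mono_left nhdsWithin_le_nhds
  have hFt : Tendsto F (𝓝[>] (-a)) (𝓝 (F (-a))) :=
    (hFcont.tendsto _).mono_left nhdsWithin_le_nhds
  have hkey : 0 ≤ F (-a) := by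
    apply le_of_tendsto_of_tendsto hgt hFt
    filter_upwards [Ioo_mem_nhdsGT_of_mem (Set.left_mem_Ico.2 (by linarith : (-a:ℝ) < a))] with t ht
    exact hFlb t (Set.Ioo_subset_Ioc_self ht)
  have hFval : F (-a) = (∫ y in Set.Ioo (-a) a, (deriv u y) ^ 2)
      - k ^ 2 * ∫ y in Set.Ioo (-a) a, u y ^ 2 := by
    show (∫ y in (-a)..a, ((deriv u y) ^ 2 - k ^ 2 * u y ^ 2)) = _
    rw [intervalIntegral.integral_of_le (by linarith : (-a : ℝ) ≤ a),
      integral_Ioc_eq_integral_Ioo]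
    have hi1 : IntegrableOn (fun y => (deriv u y) ^ 2) (Set.Ioo (-a) a) :=
      ((hu'.pow 2).integrableOn_Icc (a := -a) (b := a)).mono_set Set.Ioo_subset_Icc_self
    have hi2 : IntegrableOn (fun y => k ^ 2 * u y ^ 2) (Set.Ioo (-a) a) :=
      ((continuous_const.mul (hu.continuous.pow 2)).integrableOn_Icc
        (a := -a) (b := a)).mono_set Set.Ioo_subset_Icc_self
    rw [MeasureTheory.integral_sub hi1 hi2, MeasureTheory.integral_const_mul]
  rw [hFval] at hkey
  linarith

lemma reflect_integral (a : ℝ) (ha : 0 < a) (f : ℝ → ℝ) :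
    ∫ y in Set.Ioo (-a) a, f (-y) = ∫ y in Set.Ioo (-a) a, f y := by
  rw [← integral_Ioc_eq_integral_Ioo, ← integral_Ioc_eq_integral_Ioo,
    ← intervalIntegral.integral_of_le (by linarith : (-a:ℝ) ≤ a),
    ← intervalIntegral.integral_of_le (by linarith : (-a:ℝ) ≤ a)]
  simpa using intervalIntegral.integral_comp_neg (a := -a) (b := a) f

lemma poincare_1d (a : ℝ) (ha : 0 < a) (u : ℝ → ℝ) (hu : ContDiff ℝ 1 u)
    (h0 : u (-a) = 0 ∨ u a = 0) :
    (π / (4 * a)) ^ 2 * ∫ y in Set.Ioo (-a) a, u y ^ 2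
      ≤ ∫ y in Set.Ioo (-a) a, (deriv u y) ^ 2 := by
  have hk : 0 < π / (4 * a) := div_pos pi_pos (by linarith)
  have hk4 : (π / (4 * a)) * (4 * a) = π := by field_simp
  rcases h0 with h | h
  · exact poincare_1d_aux a _ ha hk hk4 u hu h
  · have hv : ContDiff ℝ 1 (fun y => u (-y)) := hu.comp contDiff_id.neg
    have hb := poincare_1d_aux a _ ha hk hk4 (fun y => u (-y)) hv (by simpa using h)
    have e1 : (∫ y in Set.Ioo (-a) a, u (-y) ^ 2) = ∫ y in Set.Ioo (-a) a, u y ^ 2 :=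
      reflect_integral a ha (fun y => u y ^ 2)
    have e2 : (∫ y in Set.Ioo (-a) a, (deriv (fun y => u (-y)) y) ^ 2)
        = ∫ y in Set.Ioo (-a) a, (deriv u y) ^ 2 := by
      have : ∀ y : ℝ, (deriv (fun y => u (-y)) y) ^ 2 = (fun t => (deriv u t)^2) (-y) := by
        intro y; rw [deriv_comp_neg]; ring
      simp_rw [this]
      exact reflect_integral a ha (fun t => (deriv u t) ^ 2)
    rw [e1, e2] at hb
    exact hb

/-- Poincaré inequality `∫_Ω |∇ψ|² ≥ E₁ ∫_Ω |ψ|²` in the strip `Ω = ℝ × (-a,a)` for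
`H¹` functions vanishing on the Dirichlet part of the boundary, in either the
untwisted case (`θ = 0`, Dirichlet on `ℝ × {-a}`) or the twisted case (`θ = π`,
Dirichlet on `(-∞,0) × {-a} ∪ (0,∞) × {a}`). -/
theorem poincare_strip (a : ℝ) (ha : 0 < a) (ψ : ℝ × ℝ → ℝ)
    (hψ : ContDiff ℝ 1 ψ)
    (hint : IntegrableOn (fun p => (ψ p) ^ 2) (Set.univ ×ˢ Set.Ioo (-a) a))
    (hint' : IntegrableOn (fun p => (pd1 ψ p) ^ 2 + (pd2 ψ p) ^ 2)
      (Set.univ ×ˢ Set.Ioo (-a) a))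
    (hbc : (∀ x1 : ℝ, ψ (x1, -a) = 0) ∨
      ((∀ x1 : ℝ, x1 < 0 → ψ (x1, -a) = 0) ∧ (∀ x1 : ℝ, 0 < x1 → ψ (x1, a) = 0))) :
    (π / (4 * a)) ^ 2 * ∫ p in Set.univ ×ˢ Set.Ioo (-a) a, (ψ p) ^ 2
      ≤ ∫ p in Set.univ ×ˢ Set.Ioo (-a) a, ((pd1 ψ p) ^ 2 + (pd2 ψ p) ^ 2) := by
  set s := Set.Ioo (-a) a with hsdef
  set Ω := Set.univ ×ˢ s with hΩdef
  have hmeq : (volume : Measure (ℝ × ℝ)).restrict Ω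
      = volume.prod (volume.restrict s) := by
    rw [Measure.volume_eq_prod, ← Measure.prod_restrict, Measure.restrict_univ]
  -- continuity of partial derivatives
  have hψd : Differentiable ℝ ψ := hψ.differentiable one_ne_zero
  have hpd1d : ∀ p : ℝ × ℝ, HasDerivAt (fun t => ψ (t, p.2)) (fderiv ℝ ψ p (1, 0)) p.1 := by
    intro p
    have h2 : HasDerivAt (fun t : ℝ => (t, p.2)) ((1 : ℝ), (0 : ℝ)) p.1 :=
      (hasDerivAt_id p.1).prodMk (hasDerivAt_const p.1 p.2)
    have h1 : HasFDerivAt ψ (fderiv ℝ ψ p) (p.1, p.2) := by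
      rw [Prod.mk.eta]; exact (hψd p).hasFDerivAt
    exact h1.comp_hasDerivAt p.1 h2
  have hpd2d : ∀ p : ℝ × ℝ, HasDerivAt (fun t => ψ (p.1, t)) (fderiv ℝ ψ p (0, 1)) p.2 := by
    intro p
    have h2 : HasDerivAt (fun t : ℝ => (p.1, t)) ((0 : ℝ), (1 : ℝ)) p.2 :=
      (hasDerivAt_const p.2 p.1).prodMk (hasDerivAt_id p.2)
    have h1 : HasFDerivAt ψ (fderiv ℝ ψ p) (p.1, p.2) := by
      rw [Prod.mk.eta]; exact (hψd p).hasFDerivAt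
    exact h1.comp_hasDerivAt p.2 h2
  have hpd1eq : pd1 ψ = fun p => fderiv ℝ ψ p (1, 0) :=
    funext fun p => (hpd1d p).deriv
  have hpd2eq : pd2 ψ = fun p => fderiv ℝ ψ p (0, 1) :=
    funext fun p => (hpd2d p).deriv
  have hpd1c : Continuous (pd1 ψ) := by
    rw [hpd1eq]; exact (hψ.continuous_fderiv one_ne_zero).clm_apply continuous_const
  have hpd2c : Continuous (pd2 ψ) := by
    rw [hpd2eq]; exact (hψ.continuous_fderiv one_ne_zero).clm_apply continuous_const
  -- integrability of the squared partials
  have hint1 : IntegrableOn (fun p => (pd1 ψ p) ^ 2) Ω := by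
    apply Integrable.mono' hint' ((hpd1c.fun_pow 2).aestronglyMeasurable)
    filter_upwards with p
    rw [Real.norm_eq_abs, abs_of_nonneg (sq_nonneg _)]
    nlinarith [sq_nonneg (pd2 ψ p)]
  have hint2 : IntegrableOn (fun p => (pd2 ψ p) ^ 2) Ω := by
    apply Integrable.mono' hint' ((hpd2c.fun_pow 2).aestronglyMeasurable)
    filter_upwards with p
    rw [Real.norm_eq_abs, abs_of_nonneg (sq_nonneg _)]
    nlinarith [sq_nonneg (pd1 ψ p)]
  -- product-measure versions
  have hψP : Integrable (fun p : ℝ × ℝ => ψ p ^ 2) (volume.prod (volume.restrict s)) := by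
    have h := hint; rwa [IntegrableOn, hmeq] at h
  have hd2P : Integrable (fun p : ℝ × ℝ => (pd2 ψ p) ^ 2)
      (volume.prod (volume.restrict s)) := by
    have h := hint2; rwa [IntegrableOn, hmeq] at h
  have e1 : (∫ p in Ω, ψ p ^ 2) = ∫ x : ℝ, ∫ y in s, ψ (x, y) ^ 2 := by
    calc (∫ p in Ω, ψ p ^ 2)
        = ∫ p, ψ p ^ 2 ∂(volume.prod (volume.restrict s)) := by rw [← hmeq]
      _ = ∫ x : ℝ, ∫ y in s, ψ (x, y) ^ 2 := integral_prod _ hψP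
  have e2 : (∫ p in Ω, (pd2 ψ p) ^ 2) = ∫ x : ℝ, ∫ y in s, (pd2 ψ (x, y)) ^ 2 := by
    calc (∫ p in Ω, (pd2 ψ p) ^ 2)
        = ∫ p, (pd2 ψ p) ^ 2 ∂(volume.prod (volume.restrict s)) := by rw [← hmeq]
      _ = ∫ x : ℝ, ∫ y in s, (pd2 ψ (x, y)) ^ 2 := integral_prod _ hd2P
  -- fiberwise inequality
  have hfib : ∀ᵐ x : ℝ, (π / (4 * a)) ^ 2 * ∫ y in s, ψ (x, y) ^ 2
      ≤ ∫ y in s, (pd2 ψ (x, y)) ^ 2 := by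
    have hcd : ∀ x : ℝ, ContDiff ℝ 1 (fun t => ψ (x, t)) :=
      fun x => hψ.comp (contDiff_const.prodMk contDiff_id)
    have hder : ∀ x y : ℝ, deriv (fun t => ψ (x, t)) y = pd2 ψ (x, y) := fun x y => rfl
    rcases hbc with hb | ⟨hbl, hbr⟩
    · apply ae_of_all
      intro x
      have := poincare_1d a ha (fun t => ψ (x, t)) (hcd x) (Or.inl (hb x))
      simpa [hder] using this
    · have hne : ∀ᵐ x : ℝ, x ≠ 0 := by
        rw [ae_iff]
        have hs0 : {x : ℝ | ¬ x ≠ 0} = {0} := by ext x; simp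
        rw [hs0]
        exact measure_singleton 0
      filter_upwards [hne] with x hx
      rcases lt_or_gt_of_ne hx with hlt | hgt
      · have := poincare_1d a ha (fun t => ψ (x, t)) (hcd x) (Or.inl (hbl x hlt))
        simpa [hder] using this
      · have := poincare_1d a ha (fun t => ψ (x, t)) (hcd x) (Or.inr (hbr x hgt))
        simpa [hder] using this
  -- integrate the fiberwise inequality
  have hL : Integrable (fun x : ℝ => (π / (4 * a)) ^ 2 * ∫ y in s, ψ (x, y) ^ 2) :=
    (hψP.integral_prod_left).const_mul _
  have hR : Integrable (fun x : ℝ => ∫ y in s, (pd2 ψ (x, y)) ^ 2) :=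
    hd2P.integral_prod_left
  have hmono := integral_mono_ae hL hR hfib
  rw [MeasureTheory.integral_const_mul] at hmono
  -- assemble
  have hstep : (π / (4 * a)) ^ 2 * ∫ p in Ω, ψ p ^ 2 ≤ ∫ p in Ω, (pd2 ψ p) ^ 2 := by
    rw [e1, e2]; exact hmono
  have hfinal : (∫ p in Ω, (pd2 ψ p) ^ 2)
      ≤ ∫ p in Ω, ((pd1 ψ p) ^ 2 + (pd2 ψ p) ^ 2) := by
    rw [MeasureTheory.integral_add hint1 hint2]
    have : 0 ≤ ∫ p in Ω, (pd1 ψ p) ^ 2 :=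
      setIntegral_nonneg (by rw [hΩdef]; exact MeasurableSet.univ.prod measurableSet_Ioo)
        (fun p _ => sq_nonneg _)
    linarith
  exact le_trans hstep hfinal
end

section
/- There exists a constant C such that for all t ≥ 1 the operator norm of the one-dimensional heat semigroup e^{tΔ} from the weighted space L²(ℝ, e^{x²/4}dx) to L²(ℝ) satisfies C^{-1} t^{-1/4} ≤ ‖e^{tΔ}‖ ≤ C t^{-1/4}. -/
open Real MeasureTheory

/-- The one-dimensional heat semigroup `e^{tΔ}` acting by convolution with the
Gaussian heat kernel. -/
noncomputable def heatSemigroup1d (t : ℝ) (φ : ℝ → ℝ) : ℝ → ℝ := fun x =>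
  ∫ x' : ℝ, (4 * π * t) ^ (-(1 : ℝ) / 2) * Real.exp (-(x - x') ^ 2 / (4 * t)) * φ x'

lemma heat_aux_exp_sq : ∀ a : ℝ, (Real.exp a)^2 = Real.exp (a + a) := fun a => by
  rw [Real.exp_add, sq]

lemma heat_aux_asm (t : ℝ) (φ : ℝ → ℝ) (hφ : Measurable φ) :
    AEStronglyMeasurable (heatSemigroup1d t φ) volume := by
  have hm : Measurable (fun p : ℝ × ℝ => (4 * π * t) ^ (-(1 : ℝ) / 2)
      * Real.exp (-(p.1 - p.2) ^ 2 / (4 * t)) * φ p.2) := by fun_prop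
  exact (hm.stronglyMeasurable.integral_prod_right').aestronglyMeasurable

lemma heat_pointwise_upper (t : ℝ) (ht : 1 ≤ t) (φ : ℝ → ℝ) (hφ : Measurable φ)
    (hInt : Integrable (fun x : ℝ => (φ x) ^ 2 * Real.exp (x ^ 2 / 4))) (x : ℝ) :
    (heatSemigroup1d t φ x)^2 ≤ ((4*π*t) ^ (-(1:ℝ)/2))^2 * Real.sqrt (8*π)
      * Real.exp (-(x^2)/(16*t)) * ∫ s : ℝ, (φ s) ^ 2 * Real.exp (s ^ 2 / 4) := by
  have ht0 : (0:ℝ) < t := lt_of_lt_of_le one_pos ht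
  have h4 : (0:ℝ) < 4*π*t := by positivity
  set c : ℝ := (4*π*t) ^ (-(1:ℝ)/2) with hc
  have hcpos : 0 < c := Real.rpow_pos_of_pos h4 _
  set f : ℝ → ℝ := fun s => c * Real.exp (-(x - s) ^ 2 / (4*t)) * Real.exp (-(s^2/8)) with hf
  set g : ℝ → ℝ := fun s => |φ s| * Real.exp (s^2/8) with hg
  have expsq := heat_aux_exp_sq
  have hfg : ∀ s, |c * Real.exp (-(x - s) ^ 2 / (4*t)) * φ s| = f s * g s := by
    intro s
    rw [abs_mul, abs_mul, abs_of_pos hcpos, abs_of_pos (Real.exp_pos _)]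
    simp only [hf, hg]
    rw [show c * Real.exp (-(x - s) ^ 2 / (4*t)) * Real.exp (-(s^2/8)) * (|φ s| * Real.exp (s^2/8))
        = c * Real.exp (-(x - s) ^ 2 / (4*t)) * |φ s| * (Real.exp (-(s^2/8)) * Real.exp (s^2/8)) by ring,
      ← Real.exp_add]
    norm_num
  have hfnn : ∀ s, 0 ≤ f s := fun s => by positivity
  have hgnn : ∀ s, 0 ≤ g s := fun s => by positivity
  have hfmeas : Measurable f := by fun_prop
  have hgmeas : Measurable g := hφ.abs.mul (by fun_prop)
  set B : ℝ → ℝ := fun s => c^2 * Real.exp (-(x^2)/(16*t)) * Real.exp (-(s^2/8)) with hB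
  have hf2leB : ∀ s, f s ^ 2 ≤ B s := by
    intro s
    have harg : -(x - s) ^ 2 / (4*t) + -(x - s) ^ 2 / (4*t) + (-(s^2/8) + -(s^2/8))
        ≤ -(x^2)/(16*t) + -(s^2/8) := by
      rw [← add_div, ← sub_nonneg]
      have heq : (-(x^2)/(16*t) + -(s^2/8)) - ((-(x - s) ^ 2 + -(x - s) ^ 2) / (4*t) + (-(s^2/8) + -(s^2/8)))
          = (8*(x-s)^2 + 2*t*s^2 - x^2) / (16*t) := by
        field_simp
        ring
      rw [heq]
      apply div_nonneg _ (by positivity)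
      nlinarith [sq_nonneg (x - 2*s), sq_nonneg s, mul_nonneg (sub_nonneg.2 ht) (sq_nonneg s)]
    calc f s ^ 2 = c^2 * Real.exp (-(x - s) ^ 2 / (4*t) + -(x - s) ^ 2 / (4*t) + (-(s^2/8) + -(s^2/8))) := by
          simp only [hf, mul_pow, expsq]
          rw [mul_assoc, ← Real.exp_add]
      _ ≤ c^2 * Real.exp (-(x^2)/(16*t) + -(s^2/8)) := by
          exact mul_le_mul_of_nonneg_left (Real.exp_le_exp.2 harg) (by positivity)
      _ = B s := by rw [hB, Real.exp_add]; ring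
  have hBint : Integrable B := by
    have : Integrable (fun s : ℝ => Real.exp (-(1/8 : ℝ) * s^2)) :=
      integrable_exp_neg_mul_sq (by norm_num)
    have h8 : (fun s : ℝ => Real.exp (-(s^2/8))) = fun s : ℝ => Real.exp (-(1/8 : ℝ) * s^2) := by
      funext s; ring_nf
    exact ((h8 ▸ this).const_mul _ : Integrable fun s => (c^2 * Real.exp (-(x^2)/(16*t))) * Real.exp (-(s^2/8)))
  have hf2int : Integrable (fun s => f s ^ 2) :=
    hBint.mono' ((hfmeas.pow_const 2).aestronglyMeasurable)
      (Filter.Eventually.of_forall fun s => by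
        rw [Real.norm_of_nonneg (by positivity)]; exact hf2leB s)
  have hg2eq : (fun s => g s ^ 2) = fun s : ℝ => (φ s) ^ 2 * Real.exp (s ^ 2 / 4) := by
    funext s
    simp only [hg]
    rw [mul_pow, sq_abs, expsq]
    congr 1
    ring
  have hg2int : Integrable (fun s => g s ^ 2) := hg2eq ▸ hInt
  have hmemf : MemLp f (ENNReal.ofReal 2) := by
    rw [show ENNReal.ofReal 2 = 2 by norm_num]
    exact (memLp_two_iff_integrable_sq hfmeas.aestronglyMeasurable).2 hf2int
  have hmemg : MemLp g (ENNReal.ofReal 2) := by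
    rw [show ENNReal.ofReal 2 = 2 by norm_num]
    exact (memLp_two_iff_integrable_sq hgmeas.aestronglyMeasurable).2 hg2int
  have hpq : (2:ℝ).HolderConjugate 2 := Real.HolderConjugate.two_two
  have CS := integral_mul_le_Lp_mul_Lq_of_nonneg hpq
    (Filter.Eventually.of_forall hfnn) (Filter.Eventually.of_forall hgnn) hmemf hmemg
  have hr2 : ∀ h : ℝ → ℝ, (∫ s, h s ^ (2:ℝ)) = ∫ s, h s ^ 2 := by
    intro h
    congr 1; funext s
    rw [show (2:ℝ) = ((2:ℕ):ℝ) by norm_num, Real.rpow_natCast]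
  rw [hr2 f, hr2 g, ← Real.sqrt_eq_rpow, ← Real.sqrt_eq_rpow] at CS
  have hheat : heatSemigroup1d t φ x = ∫ s, c * Real.exp (-(x - s) ^ 2 / (4*t)) * φ s := rfl
  have habs : |heatSemigroup1d t φ x| ≤ ∫ s, f s * g s := by
    rw [hheat, ← Real.norm_eq_abs]
    calc ‖∫ s, c * Real.exp (-(x - s) ^ 2 / (4*t)) * φ s‖
        ≤ ∫ s, ‖c * Real.exp (-(x - s) ^ 2 / (4*t)) * φ s‖ :=
          norm_integral_le_integral_norm _
      _ = ∫ s, f s * g s := by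
          congr 1; funext s; rw [Real.norm_eq_abs, hfg s]
  have hIfg_nn : (0:ℝ) ≤ ∫ s, f s * g s :=
    integral_nonneg fun s => mul_nonneg (hfnn s) (hgnn s)
  have step1 : (heatSemigroup1d t φ x)^2 ≤ (∫ s, f s ^ 2) * ∫ s, g s ^ 2 := by
    calc (heatSemigroup1d t φ x)^2 = |heatSemigroup1d t φ x|^2 := (sq_abs _).symm
      _ ≤ (∫ s, f s * g s)^2 := by
          exact pow_le_pow_left₀ (abs_nonneg _) habs 2
      _ ≤ (Real.sqrt (∫ s, f s ^ 2) * Real.sqrt (∫ s, g s ^ 2))^2 := by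
          exact pow_le_pow_left₀ hIfg_nn CS 2
      _ = (∫ s, f s ^ 2) * ∫ s, g s ^ 2 := by
          rw [mul_pow, Real.sq_sqrt (integral_nonneg fun s => sq_nonneg _),
            Real.sq_sqrt (integral_nonneg fun s => sq_nonneg _)]
  have hintB : (∫ s, B s) = c^2 * Real.exp (-(x^2)/(16*t)) * Real.sqrt (8*π) := by
    rw [hB]
    simp only
    rw [MeasureTheory.integral_const_mul]
    congr 1
    have h8 : (fun s : ℝ => Real.exp (-(s^2/8))) = fun s : ℝ => Real.exp (-(1/8 : ℝ) * s^2) := by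
      funext s; ring_nf
    rw [h8, integral_gaussian]
    congr 1
    rw [show (1:ℝ)/8 = (8:ℝ)⁻¹ by norm_num, div_inv_eq_mul]
    ring
  have step2 : (∫ s, f s ^ 2) ≤ c^2 * Real.exp (-(x^2)/(16*t)) * Real.sqrt (8*π) := by
    rw [← hintB]
    exact integral_mono hf2int hBint hf2leB
  calc (heatSemigroup1d t φ x)^2 ≤ (∫ s, f s ^ 2) * ∫ s, g s ^ 2 := step1
    _ ≤ (c^2 * Real.exp (-(x^2)/(16*t)) * Real.sqrt (8*π)) * ∫ s, g s ^ 2 :=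
        mul_le_mul_of_nonneg_right step2 (integral_nonneg fun s => sq_nonneg _)
    _ = c^2 * Real.sqrt (8*π) * Real.exp (-(x^2)/(16*t)) * ∫ s : ℝ, (φ s) ^ 2 * Real.exp (s ^ 2 / 4) := by
        rw [hg2eq] at *
        ring

lemma heat_sq_integrable (t : ℝ) (ht : 1 ≤ t) (φ : ℝ → ℝ) (hφ : Measurable φ)
    (hInt : Integrable (fun x : ℝ => (φ x) ^ 2 * Real.exp (x ^ 2 / 4))) :
    Integrable (fun x : ℝ => (heatSemigroup1d t φ x)^2) := by
  have ht0 : (0:ℝ) < t := lt_of_lt_of_le one_pos ht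
  set c : ℝ := (4*π*t) ^ (-(1:ℝ)/2) with hc
  set M : ℝ := ∫ s : ℝ, (φ s) ^ 2 * Real.exp (s ^ 2 / 4) with hM
  have hG : Integrable (fun x : ℝ => (c^2 * Real.sqrt (8*π) * M) * Real.exp (-(1/(16*t)) * x^2)) :=
    (integrable_exp_neg_mul_sq (by positivity)).const_mul _
  refine hG.mono' ?_ (Filter.Eventually.of_forall fun x => ?_)
  · have h := heat_aux_asm t φ hφ
    have : (fun x => (heatSemigroup1d t φ x)^2)
        = fun x => heatSemigroup1d t φ x * heatSemigroup1d t φ x := by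
      funext x; rw [sq]
    rw [this]
    exact h.mul h
  · rw [Real.norm_of_nonneg (sq_nonneg _)]
    calc (heatSemigroup1d t φ x)^2
        ≤ c^2 * Real.sqrt (8*π) * Real.exp (-(x^2)/(16*t)) * M :=
          heat_pointwise_upper t ht φ hφ hInt x
      _ = (c^2 * Real.sqrt (8*π) * M) * Real.exp (-(1/(16*t)) * x^2) := by
          rw [show -(x^2)/(16*t) = -(1/(16*t)) * x^2 by ring]
          ring

/-- There is a constant `C` such that for all `t ≥ 1` the operator norm of `e^{tΔ}` from
`L²(ℝ, e^{x²/4}dx)` to `L²(ℝ)` satisfies `C⁻¹ t^{-1/4} ≤ ‖e^{tΔ}‖ ≤ C t^{-1/4}`. -/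
theorem heat_semigroup_weighted_decay :
    ∃ C > (0 : ℝ), ∀ t : ℝ, 1 ≤ t →
      (∀ φ : ℝ → ℝ, Measurable φ →
        Integrable (fun x : ℝ => (φ x) ^ 2 * Real.exp (x ^ 2 / 4)) →
        ∫ x : ℝ, (heatSemigroup1d t φ x) ^ 2
          ≤ (C * t ^ (-(1 : ℝ) / 4)) ^ 2 * ∫ x : ℝ, (φ x) ^ 2 * Real.exp (x ^ 2 / 4)) ∧
      (∃ φ : ℝ → ℝ, Measurable φ ∧
        Integrable (fun x : ℝ => (φ x) ^ 2 * Real.exp (x ^ 2 / 4)) ∧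
        0 < ∫ x : ℝ, (φ x) ^ 2 * Real.exp (x ^ 2 / 4) ∧
        (C⁻¹ * t ^ (-(1 : ℝ) / 4)) ^ 2 * (∫ x : ℝ, (φ x) ^ 2 * Real.exp (x ^ 2 / 4))
          ≤ ∫ x : ℝ, (heatSemigroup1d t φ x) ^ 2) := by
  refine ⟨10, by norm_num, fun t ht => ?_⟩
  have ht0 : (0:ℝ) < t := lt_of_lt_of_le one_pos ht
  have h4 : (0:ℝ) < 4*π*t := by positivity
  set c : ℝ := (4*π*t) ^ (-(1:ℝ)/2) with hcdef
  have hcpos : 0 < c := Real.rpow_pos_of_pos h4 _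
  have hc2 : c^2 = (4*π*t)⁻¹ := by
    rw [hcdef, ← Real.rpow_natCast ((4*π*t) ^ (-(1:ℝ)/2)) 2, ← Real.rpow_mul h4.le]
    norm_num [Real.rpow_neg_one]
  have hrt : t ^ (-(1:ℝ)/2) = Real.sqrt t / t := by
    rw [show -(1:ℝ)/2 = -(1/2) by ring, Real.rpow_neg ht0.le, ← Real.sqrt_eq_rpow]
    rw [eq_div_iff ht0.ne', inv_mul_eq_div, div_eq_iff (Real.sqrt_pos.2 ht0).ne',
      Real.mul_self_sqrt ht0.le]
  have hquart : ∀ a : ℝ, (t ^ (-(1:ℝ)/4) * a)^2 = t ^ (-(1:ℝ)/2) * a^2 := by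
    intro a
    rw [mul_pow, ← Real.rpow_natCast (t ^ (-(1:ℝ)/4)) 2, ← Real.rpow_mul ht0.le]
    norm_num
  constructor
  · -- upper bound
    intro φ hφ hInt
    set M : ℝ := ∫ s : ℝ, (φ s) ^ 2 * Real.exp (s ^ 2 / 4) with hM
    have hM0 : 0 ≤ M := integral_nonneg fun s => by positivity
    have hGint : Integrable (fun x : ℝ => (c^2 * Real.sqrt (8*π) * M) * Real.exp (-(1/(16*t)) * x^2)) :=
      (integrable_exp_neg_mul_sq (by positivity)).const_mul _
    have hmono : (∫ x : ℝ, (heatSemigroup1d t φ x) ^ 2)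
        ≤ ∫ x : ℝ, (c^2 * Real.sqrt (8*π) * M) * Real.exp (-(1/(16*t)) * x^2) := by
      refine integral_mono_of_nonneg (Filter.Eventually.of_forall fun x => sq_nonneg _)
        hGint (Filter.Eventually.of_forall fun x => ?_)
      calc (heatSemigroup1d t φ x)^2
          ≤ c^2 * Real.sqrt (8*π) * Real.exp (-(x^2)/(16*t)) * M :=
            heat_pointwise_upper t ht φ hφ hInt x
        _ = (c^2 * Real.sqrt (8*π) * M) * Real.exp (-(1/(16*t)) * x^2) := by
            rw [show -(x^2)/(16*t) = -(1/(16*t)) * x^2 by ring]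
            ring
    have hGval : (∫ x : ℝ, (c^2 * Real.sqrt (8*π) * M) * Real.exp (-(1/(16*t)) * x^2))
        = (c^2 * Real.sqrt (8*π) * M) * Real.sqrt (16*π*t) := by
      rw [MeasureTheory.integral_const_mul, integral_gaussian]
      congr 2
      rw [show (1:ℝ)/(16*t) = (16*t)⁻¹ by norm_num, div_inv_eq_mul]
      ring
    have h6 : Real.sqrt (8*π) ≤ 6 := by
      calc Real.sqrt (8*π) ≤ Real.sqrt 36 := Real.sqrt_le_sqrt (by nlinarith [Real.pi_le_four])
        _ = 6 := by rw [show (36:ℝ) = 6^2 by norm_num, Real.sqrt_sq (by norm_num)]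
    have h8 : Real.sqrt (16*π) ≤ 8 := by
      calc Real.sqrt (16*π) ≤ Real.sqrt 64 := Real.sqrt_le_sqrt (by nlinarith [Real.pi_le_four])
        _ = 8 := by rw [show (64:ℝ) = 8^2 by norm_num, Real.sqrt_sq (by norm_num)]
    have coeff : (4*π)⁻¹ * (Real.sqrt (8*π) * Real.sqrt (16*π)) ≤ 100 := by
      rw [inv_mul_le_iff₀ (by positivity)]
      nlinarith [Real.sqrt_nonneg (8*π), Real.sqrt_nonneg (16*π), Real.pi_gt_three]
    have key : (4*π*t)⁻¹ * Real.sqrt (8*π) * Real.sqrt (16*π*t) ≤ 100 * t ^ (-(1:ℝ)/2) := by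
      calc (4*π*t)⁻¹ * Real.sqrt (8*π) * Real.sqrt (16*π*t)
          = ((4*π)⁻¹ * (Real.sqrt (8*π) * Real.sqrt (16*π))) * (t⁻¹ * Real.sqrt t) := by
            rw [show (16*π*t : ℝ) = (16*π)*t by ring,
              Real.sqrt_mul (by positivity : (0:ℝ) ≤ 16*π) t,
              show (4*π*t : ℝ) = (4*π)*t by ring, mul_inv]
            ring
        _ ≤ 100 * (t⁻¹ * Real.sqrt t) :=
            mul_le_mul_of_nonneg_right coeff (by positivity)
        _ = 100 * t ^ (-(1:ℝ)/2) := by rw [hrt]; ring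
    calc (∫ x : ℝ, (heatSemigroup1d t φ x) ^ 2)
        ≤ (c^2 * Real.sqrt (8*π) * M) * Real.sqrt (16*π*t) := hmono.trans (le_of_eq hGval)
      _ = ((4*π*t)⁻¹ * Real.sqrt (8*π) * Real.sqrt (16*π*t)) * M := by rw [hc2]; ring
      _ ≤ (100 * t ^ (-(1:ℝ)/2)) * M := mul_le_mul_of_nonneg_right key hM0
      _ = (10 * t ^ (-(1:ℝ)/4)) ^ 2 * M := by
          rw [show (10 * t ^ (-(1:ℝ)/4)) ^2 = 100 * (t ^ (-(1:ℝ)/4) * 1)^2 by ring, hquart]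
          ring
  · -- lower bound
    set φ : ℝ → ℝ := Set.indicator (Set.Icc (0:ℝ) 1) (fun _ => (1:ℝ)) with hφdef
    have hφm : Measurable φ := measurable_const.indicator measurableSet_Icc
    have h_eq : (fun x : ℝ => (φ x) ^ 2 * Real.exp (x ^ 2 / 4))
        = Set.indicator (Set.Icc (0:ℝ) 1) (fun x => Real.exp (x ^ 2 / 4)) := by
      funext x
      by_cases hx : x ∈ Set.Icc (0:ℝ) 1
      · simp [hφdef, Set.indicator_of_mem hx]
      · simp [hφdef, Set.indicator_of_notMem hx]
    have hcont : Continuous (fun x : ℝ => Real.exp (x ^ 2 / 4)) := by fun_prop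
    have hIntOn : IntegrableOn (fun x : ℝ => Real.exp (x ^ 2 / 4)) (Set.Icc 0 1) :=
      hcont.integrableOn_Icc
    have hIntφ : Integrable (fun x : ℝ => (φ x) ^ 2 * Real.exp (x ^ 2 / 4)) := by
      rw [h_eq]
      exact hIntOn.integrable_indicator measurableSet_Icc
    have hvol : (volume (Set.Icc (0:ℝ) 1)).toReal = 1 := by
      rw [Real.volume_Icc]
      norm_num
    have hMint : (∫ x : ℝ, (φ x) ^ 2 * Real.exp (x ^ 2 / 4))
        = ∫ x in Set.Icc (0:ℝ) 1, Real.exp (x ^ 2 / 4) := by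
      rw [h_eq, integral_indicator measurableSet_Icc]
    have hM1 : (1:ℝ) ≤ ∫ x in Set.Icc (0:ℝ) 1, Real.exp (x ^ 2 / 4) := by
      have := setIntegral_ge_of_const_le measurableSet_Icc measure_Icc_lt_top.ne
        (fun x _ => Real.one_le_exp (by positivity)) hIntOn
      rwa [measureReal_def, hvol, smul_eq_mul, mul_one] at this
    have hM3 : (∫ x in Set.Icc (0:ℝ) 1, Real.exp (x ^ 2 / 4)) ≤ 3 := by
      have hb : ∀ x ∈ Set.Icc (0:ℝ) 1, Real.exp (x ^ 2 / 4) ≤ 3 := by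
        intro x hx
        have h1 : x^2/4 ≤ 1 := by nlinarith [hx.1, hx.2]
        calc Real.exp (x^2/4) ≤ Real.exp 1 := Real.exp_le_exp.2 h1
          _ ≤ 3 := (Real.exp_one_lt_d9).le.trans (by norm_num)
      calc (∫ x in Set.Icc (0:ℝ) 1, Real.exp (x ^ 2 / 4))
          ≤ ∫ _x in Set.Icc (0:ℝ) 1, (3:ℝ) :=
            setIntegral_mono_on hIntOn (integrableOn_const measure_Icc_lt_top.ne)
              measurableSet_Icc hb
        _ = 3 := by rw [setIntegral_const, measureReal_def, hvol, smul_eq_mul, one_mul]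
    have hrw : ∀ x : ℝ, heatSemigroup1d t φ x
        = ∫ s in Set.Icc (0:ℝ) 1, c * Real.exp (-(x - s) ^ 2 / (4*t)) := by
      intro x
      have hker : (fun s : ℝ => c * Real.exp (-(x - s) ^ 2 / (4*t)) * φ s)
          = Set.indicator (Set.Icc (0:ℝ) 1) (fun s => c * Real.exp (-(x - s) ^ 2 / (4*t))) := by
        funext s
        by_cases hs : s ∈ Set.Icc (0:ℝ) 1
        · simp [hφdef, Set.indicator_of_mem hs]
        · simp [hφdef, Set.indicator_of_notMem hs]
      show (∫ s : ℝ, c * Real.exp (-(x - s) ^ 2 / (4*t)) * φ s) = _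
      rw [hker, integral_indicator measurableSet_Icc]
    have hheatnn : ∀ x : ℝ, 0 ≤ heatSemigroup1d t φ x := by
      intro x
      rw [hrw]
      exact setIntegral_nonneg measurableSet_Icc fun s _ => by positivity
    have hsqrt1 : (1:ℝ) ≤ Real.sqrt t := by
      rw [show (1:ℝ) = Real.sqrt 1 by rw [Real.sqrt_one]]
      exact Real.sqrt_le_sqrt ht
    have hlow : ∀ x ∈ Set.Icc (0:ℝ) (Real.sqrt t),
        c * Real.exp (-(1/4 : ℝ)) ≤ heatSemigroup1d t φ x := by
      intro x hx
      rw [hrw]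
      have hker_int : IntegrableOn (fun s : ℝ => c * Real.exp (-(x - s) ^ 2 / (4*t)))
          (Set.Icc 0 1) := (Continuous.integrableOn_Icc (by fun_prop))
      have hpt : ∀ s ∈ Set.Icc (0:ℝ) 1,
          c * Real.exp (-(1/4 : ℝ)) ≤ c * Real.exp (-(x - s) ^ 2 / (4*t)) := by
        intro s hs
        refine mul_le_mul_of_nonneg_left (Real.exp_le_exp.2 ?_) hcpos.le
        rw [neg_div, neg_le_neg_iff]
        have hxs : (x - s)^2 ≤ t := by
          have h1 : -Real.sqrt t ≤ x - s := by
            have := hs.2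
            have := hx.1
            linarith [hsqrt1]
          have h2 : x - s ≤ Real.sqrt t := by
            have := hs.1
            have := hx.2
            linarith
          have := sq_le_sq' h1 h2
          rwa [Real.sq_sqrt ht0.le] at this
        rw [div_le_div_iff₀ (by positivity) (by norm_num)]
        linarith
      have := setIntegral_ge_of_const_le measurableSet_Icc measure_Icc_lt_top.ne hpt hker_int
      rwa [measureReal_def, hvol, smul_eq_mul, one_mul] at this
    have hInt2 : Integrable (fun x : ℝ => (heatSemigroup1d t φ x)^2) :=
      heat_sq_integrable t ht φ hφm hIntφ
    have hvolsqrt : (volume (Set.Icc (0:ℝ) (Real.sqrt t))).toReal = Real.sqrt t := by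
      rw [Real.volume_Icc, sub_zero, ENNReal.toReal_ofReal (Real.sqrt_nonneg t)]
    have hstep : (c * Real.exp (-(1/4 : ℝ)))^2 * Real.sqrt t
        ≤ ∫ x : ℝ, (heatSemigroup1d t φ x)^2 := by
      have h1 : (c * Real.exp (-(1/4 : ℝ)))^2 * (volume (Set.Icc (0:ℝ) (Real.sqrt t))).toReal
          ≤ ∫ x in Set.Icc (0:ℝ) (Real.sqrt t), (heatSemigroup1d t φ x)^2 := by
        refine setIntegral_ge_of_const_le_real measurableSet_Icc measure_Icc_lt_top.ne
          (fun x hx => ?_) hInt2.integrableOn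
        exact pow_le_pow_left₀ (by positivity) (hlow x hx) 2
      have h2 : (∫ x in Set.Icc (0:ℝ) (Real.sqrt t), (heatSemigroup1d t φ x)^2)
          ≤ ∫ x : ℝ, (heatSemigroup1d t φ x)^2 :=
        setIntegral_le_integral hInt2 (Filter.Eventually.of_forall fun x => sq_nonneg _)
      rw [hvolsqrt] at h1
      exact h1.trans h2
    refine ⟨φ, hφm, hIntφ, ?_, ?_⟩
    · rw [hMint]; linarith
    · have hnum : (3:ℝ)/100 ≤ (4*π)⁻¹ * Real.exp (-(1/2 : ℝ)) := by
        have h17 : Real.exp (2⁻¹ : ℝ) ≤ 1.7 := by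
          have h := Real.exp_one_lt_d9
          have he : Real.exp (2⁻¹ : ℝ) = Real.sqrt (Real.exp 1) := by
            rw [show (2⁻¹ : ℝ) = 1/2 by norm_num, Real.exp_half]
          rw [he]
          calc Real.sqrt (Real.exp 1) ≤ Real.sqrt (2.89) := Real.sqrt_le_sqrt (by nlinarith)
            _ = 1.7 := by rw [show (2.89:ℝ) = 1.7^2 by norm_num, Real.sqrt_sq (by norm_num)]
        have hX : (4*π) * Real.exp (2⁻¹ : ℝ) ≤ 100/3 := by
          nlinarith [Real.exp_pos (2⁻¹ : ℝ), Real.pi_le_four]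
        have hXpos : (0:ℝ) < (4*π) * Real.exp (2⁻¹ : ℝ) := by positivity
        have := inv_anti₀ hXpos hX
        rw [Real.exp_neg, show (1/2 : ℝ) = 2⁻¹ by norm_num, ← mul_inv]
        calc (3:ℝ)/100 = (100/3 : ℝ)⁻¹ := by norm_num
          _ ≤ ((4*π) * Real.exp (2⁻¹ : ℝ))⁻¹ := this
      have hexpsq : (Real.exp (-(1/4 : ℝ)))^2 = Real.exp (-(1/2 : ℝ)) := by
        rw [heat_aux_exp_sq]
        congr 1
        norm_num
      calc (10⁻¹ * t ^ (-(1:ℝ)/4)) ^ 2 * (∫ x : ℝ, (φ x) ^ 2 * Real.exp (x ^ 2 / 4))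
          ≤ (10⁻¹ * t ^ (-(1:ℝ)/4)) ^ 2 * 3 := by
            refine mul_le_mul_of_nonneg_left ?_ (sq_nonneg _)
            rw [hMint]; exact hM3
        _ = (3/100) * t ^ (-(1:ℝ)/2) := by
            rw [show (10⁻¹ * t ^ (-(1:ℝ)/4)) ^ 2 = 10⁻¹^2 * (t ^ (-(1:ℝ)/4) * 1)^2 by ring, hquart]
            ring
        _ ≤ ((4*π)⁻¹ * Real.exp (-(1/2 : ℝ))) * t ^ (-(1:ℝ)/2) :=
            mul_le_mul_of_nonneg_right hnum (Real.rpow_nonneg ht0.le _)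
        _ = (c * Real.exp (-(1/4 : ℝ)))^2 * Real.sqrt t := by
            rw [mul_pow, hexpsq, hc2, hrt, show (4*π*t : ℝ) = (4*π)*t by ring, mul_inv]
            field_simp
        _ ≤ ∫ x : ℝ, (heatSemigroup1d t φ x)^2 := hstep
end
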